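/- Let A_1,...,A_N : H → H be linear operators on a finite-dimensional complex Hilbert space with A_{k'}† A_k = δ_{kk'} A_k† A_k and ∑_k A_k† A_k = 1. Setting Π_k = A_k† A_k and U = ∑_k A_k, one has A_k = U Π_k for every k, and the Π_k form a complete set of mutually orthogonal projections: Π_k Π_{k'} = δ_{kk'} Π_k and ∑_k Π_k = 1. -/

import Mathlib

/-- With `A k` as in Statement 2, setting `Π k = (A k)† ∘ (A k)` and
`U = ∑ k, A k`, one has `A k = U ∘ Π k` for every `k`, and the `Π k` form a complete set of
mutually orthogonal (self-adjoint, idempotent) projections: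
`Π k ∘ Π k' = δ_{kk'} Π k` and `∑ k, Π k = 1`. -/
theorem stmt_3 {H : Type*} [NormedAddCommGroup H] [InnerProductSpace ℂ H]
    [FiniteDimensional ℂ H] (N : ℕ) (A : Fin N → (H →ₗ[ℂ] H))
    (h : ∀ k k', LinearMap.adjoint (A k') ∘ₗ A k =
      if k = k' then LinearMap.adjoint (A k) ∘ₗ A k else 0)
    (hsum : ∑ k, LinearMap.adjoint (A k) ∘ₗ A k = LinearMap.id) :
    (∀ k, A k = (∑ k', A k') ∘ₗ (LinearMap.adjoint (A k) ∘ₗ A k)) ∧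
    (∀ k k', (LinearMap.adjoint (A k) ∘ₗ A k) ∘ₗ (LinearMap.adjoint (A k') ∘ₗ A k') =
      if k = k' then LinearMap.adjoint (A k) ∘ₗ A k else 0) ∧
    (∀ k, LinearMap.adjoint (LinearMap.adjoint (A k) ∘ₗ A k) =
      LinearMap.adjoint (A k) ∘ₗ A k) ∧
    (∑ k, LinearMap.adjoint (A k) ∘ₗ A k = LinearMap.id) := by
  set U : H →ₗ[ℂ] H := ∑ k', A k' with hU
  -- adjoint of U
  have hUd : LinearMap.adjoint U = ∑ k', LinearMap.adjoint (A k') := by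
    simp [hU, map_sum]
  -- U† ∘ A k = Π k
  have hUA : ∀ k, LinearMap.adjoint U ∘ₗ A k = LinearMap.adjoint (A k) ∘ₗ A k := by
    intro k
    rw [hUd, ← Module.End.mul_eq_comp, Finset.sum_mul]
    calc ∑ k', LinearMap.adjoint (A k') * A k
        = ∑ k', if k = k' then LinearMap.adjoint (A k) ∘ₗ A k else 0 :=
          Finset.sum_congr rfl fun k' _ => h k k'
      _ = LinearMap.adjoint (A k) ∘ₗ A k := by simp
  -- U† U = 1
  have hUU : LinearMap.adjoint U ∘ₗ U = LinearMap.id := by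
    conv_lhs => rw [hU, ← Module.End.mul_eq_comp, Finset.mul_sum]
    calc ∑ k, LinearMap.adjoint U * A k
        = ∑ k, LinearMap.adjoint (A k) ∘ₗ A k := by
          exact Finset.sum_congr rfl fun k _ => hUA k
      _ = LinearMap.id := hsum
  -- finite dimension: U U† = 1
  have hUU' : U ∘ₗ LinearMap.adjoint U = LinearMap.id := by
    have h1 : LinearMap.adjoint U * U = 1 := hUU
    have h2 : U * LinearMap.adjoint U = 1 := by
      rwa [mul_eq_one_comm] at h1
    exact h2
  -- A k = U Π k
  have hAk : ∀ k, A k = U ∘ₗ (LinearMap.adjoint (A k) ∘ₗ A k) := by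
    intro k
    rw [← hUA k, ← LinearMap.comp_assoc, hUU', LinearMap.id_comp]
  -- self-adjointness of Π k
  have hsa : ∀ k, LinearMap.adjoint (LinearMap.adjoint (A k) ∘ₗ A k) =
      LinearMap.adjoint (A k) ∘ₗ A k := by
    intro k
    rw [LinearMap.adjoint_comp, LinearMap.adjoint_adjoint]
  refine ⟨hAk, ?_, hsa, hsum⟩
  intro k k'
  -- Π k = A k† ∘ U  and  Π k' = U† ∘ A k'; then Π k Π k' = A k† (U U†) A k' = A k† A k'
  have hPk : LinearMap.adjoint (A k) ∘ₗ A k = LinearMap.adjoint (A k) ∘ₗ U := by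
    have h2 := congrArg LinearMap.adjoint (hUA k)
    rw [LinearMap.adjoint_comp, LinearMap.adjoint_adjoint, hsa k] at h2
    exact h2.symm
  have hPk' : LinearMap.adjoint (A k') ∘ₗ A k' = LinearMap.adjoint U ∘ₗ A k' :=
    (hUA k').symm
  have key : (LinearMap.adjoint (A k) ∘ₗ A k) ∘ₗ (LinearMap.adjoint (A k') ∘ₗ A k') =
      LinearMap.adjoint (A k) ∘ₗ A k' := by
    conv_lhs => rw [hPk, hPk']
    rw [LinearMap.comp_assoc,
      ← LinearMap.comp_assoc (A k') (LinearMap.adjoint U) U, hUU', LinearMap.id_comp]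
  rw [key, h k' k]
  by_cases hkk : k = k'
  · subst hkk; simp
  · simp [hkk, Ne.symm hkk]
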